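/- arXiv:1006.4501 — 4 statements merged into one kernel-verified Lean document; each statement's English description precedes it below -/
import Mathlib

section
/- Let G = (V,E) be a finite simple graph with m = 3s+1 edges. Then G has an edge irregular total (s+1)-weighting ŵ : V ∪ E → {1,2,…,s+1} if and only if G has a well guarded weighting w : V → {0,1,…,s}. -/
open SimpleGraph

/-- `IsEdgeIrregularTotalWeighting G s wv we` : the combined weighting given by `wv` on
vertices and `we` on edges is an edge irregular total `s`-weighting of `G`. -/
def IsEdgeIrregularTotalWeighting {V : Type*} (G : SimpleGraph V) (s : ℕ)
    (wv : V → ℕ) (we : Sym2 V → ℕ) : Prop :=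
  (∀ v, 1 ≤ wv v ∧ wv v ≤ s) ∧
  (∀ e ∈ G.edgeSet, 1 ≤ we e ∧ we e ≤ s) ∧
  ∀ u v u' v', G.Adj u v → G.Adj u' v' → s(u, v) ≠ s(u', v') →
    we s(u, v) + wv u + wv v ≠ we s(u', v') + wv u' + wv v'

/-- The weight of an edge induced by a vertex weighting `w` : for `e = xy`,
`edgeWt w e = w x + w y`. -/
def edgeWt {V : Type*} (w : V → ℕ) : Sym2 V → ℕ :=
  Sym2.lift ⟨fun x y => w x + w y, fun _ _ => Nat.add_comm _ _⟩

/-- A vertex weighting `w` of a graph `G` with `3s+1` edges is *well guarded* if for every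
`0 ≤ i ≤ 2s` we have `i + 1 ≤ |{e ∈ E : w(e) ≤ i}| ≤ i + s + 1`. -/
def WellGuarded {V : Type*} (G : SimpleGraph V) (s : ℕ) (w : V → ℕ) : Prop :=
  ∀ i ≤ 2 * s,
    i + 1 ≤ {e ∈ G.edgeSet | edgeWt w e ≤ i}.ncard ∧
    {e ∈ G.edgeSet | edgeWt w e ≤ i}.ncard ≤ i + s + 1

lemma edgeWt_mk {V : Type*} (w : V → ℕ) (u v : V) : edgeWt w s(u, v) = w u + w v := rfl

lemma edgeWt_le {V : Type*} {w : V → ℕ} {s : ℕ} (hw : ∀ v, w v ≤ s) (e : Sym2 V) :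
    edgeWt w e ≤ 2 * s := by
  induction e using Sym2.ind with
  | _ u v =>
    rw [edgeWt_mk]
    have := hw u; have := hw v; omega

/-- A finite simple graph with `m = 3s+1` edges has an edge irregular total
`(s+1)`-weighting if and only if it has a well guarded weighting `w : V → {0, 1, …, s}`. -/
theorem edgeIrregular_iff_wellGuarded {V : Type*} [Fintype V] [DecidableEq V]
    (G : SimpleGraph V) (s : ℕ) (hm : G.edgeSet.ncard = 3 * s + 1) :
    (∃ (wv : V → ℕ) (we : Sym2 V → ℕ), IsEdgeIrregularTotalWeighting G (s + 1) wv we) ↔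
      (∃ w : V → ℕ, (∀ v, w v ≤ s) ∧ WellGuarded G s w) := by
  classical
  have hfin : G.edgeSet.Finite := Set.toFinite _
  set EF : Finset (Sym2 V) := hfin.toFinset with hEF
  have hEFmem : ∀ e, e ∈ EF ↔ e ∈ G.edgeSet := fun e => hfin.mem_toFinset
  have hEFcard : EF.card = 3 * s + 1 := by
    have : G.edgeSet.ncard = EF.card := Set.ncard_eq_toFinset_card _ hfin
    omega
  have hsep : ∀ (w : V → ℕ) (i : ℕ),
      {e ∈ G.edgeSet | edgeWt w e ≤ i}.ncard
        = (EF.filter (fun e => edgeWt w e ≤ i)).card := by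
    intro w i
    rw [← Set.ncard_coe_finset]
    congr 1
    ext e
    simp [hEFmem e, Set.mem_setOf_eq]
  constructor
  · rintro ⟨wv, we, h1, h2, h3⟩
    refine ⟨fun v => wv v - 1, fun v => by have := h1 v; show wv v - 1 ≤ s; omega, ?_⟩
    set w : V → ℕ := fun v => wv v - 1 with hwdef
    have hwv2 : ∀ e, edgeWt wv e = edgeWt w e + 2 := by
      intro e
      induction e using Sym2.ind with
      | _ u v =>
        have hu := h1 u; have hv := h1 v
        rw [edgeWt_mk, edgeWt_mk]
        simp only [hwdef]; omega
    set t : Sym2 V → ℕ := fun e => we e + edgeWt wv e with ht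
    have hinj : ∀ e ∈ EF, ∀ e' ∈ EF, t e = t e' → e = e' := by
      intro e he e' he' heq
      by_contra hne
      rw [hEFmem] at he he'
      induction e using Sym2.ind with
      | _ u v =>
      induction e' using Sym2.ind with
      | _ u' v' =>
        refine h3 u v u' v' he he' hne ?_
        simp only [ht, edgeWt_mk] at heq
        omega
    have hrange : ∀ e ∈ EF, t e ∈ Finset.Icc 3 (3 * s + 3) := by
      intro e he
      rw [hEFmem] at he
      have h2e := h2 e he
      induction e using Sym2.ind with
      | _ u v =>
        have hu := h1 u; have hv := h1 v
        simp only [ht, edgeWt_mk, Finset.mem_Icc]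
        omega
    have himg : EF.image t = Finset.Icc 3 (3 * s + 3) := by
      apply Finset.eq_of_subset_of_card_le
      · intro m hm'
        obtain ⟨e, he, rfl⟩ := Finset.mem_image.mp hm'
        exact hrange e he
      · rw [Finset.card_image_of_injOn hinj, hEFcard, Nat.card_Icc]; omega
    intro i hi
    rw [hsep]
    set S := EF.filter (fun e => edgeWt w e ≤ i) with hS
    have hSinj : ∀ e ∈ S, ∀ e' ∈ S, t e = t e' → e = e' := fun e he e' he' =>
      hinj e (Finset.filter_subset _ _ he) e' (Finset.filter_subset _ _ he')
    constructor
    · have hsub : Finset.Icc 3 (i + 3) ⊆ S.image t := by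
        intro m hm'
        rw [Finset.mem_Icc] at hm'
        have : m ∈ EF.image t := by
          rw [himg, Finset.mem_Icc]; omega
        obtain ⟨e, he, rfl⟩ := Finset.mem_image.mp this
        refine Finset.mem_image.mpr ⟨e, ?_, rfl⟩
        rw [hS, Finset.mem_filter]
        refine ⟨he, ?_⟩
        have h2e := h2 e ((hEFmem e).mp he)
        have := hwv2 e
        simp only [ht] at hm'
        omega
      calc i + 1 = (Finset.Icc 3 (i + 3)).card := by rw [Nat.card_Icc]; omega
        _ ≤ (S.image t).card := Finset.card_le_card hsub
        _ ≤ S.card := Finset.card_image_le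
    · have hsub : S.image t ⊆ Finset.Icc 3 (i + s + 3) := by
        intro m hm'
        obtain ⟨e, he, rfl⟩ := Finset.mem_image.mp hm'
        rw [hS, Finset.mem_filter] at he
        have h2e := h2 e ((hEFmem e).mp he.1)
        have h3e := hrange e he.1
        rw [Finset.mem_Icc] at h3e ⊢
        have := hwv2 e
        simp only [ht] at h3e ⊢
        omega
      calc S.card = (S.image t).card := (Finset.card_image_of_injOn hSinj).symm
        _ ≤ (Finset.Icc 3 (i + s + 3)).card := Finset.card_le_card hsub
        _ = i + s + 1 := by rw [Nat.card_Icc]; omega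
  · rintro ⟨w, hw, hwg⟩
    have hwgF : ∀ i ≤ 2 * s,
        i + 1 ≤ (EF.filter (fun e => edgeWt w e ≤ i)).card ∧
          (EF.filter (fun e => edgeWt w e ≤ i)).card ≤ i + s + 1 := by
      intro i hi
      have := hwg i hi
      rw [hsep] at this
      exact this
    -- injective key
    have hne : Nonempty (Sym2 V) := by
      have : 0 < EF.card := by omega
      obtain ⟨e, -⟩ := Finset.card_pos.mp this
      exact ⟨e⟩
    set C : ℕ := Fintype.card (Sym2 V) with hC
    have hCpos : 0 < C := Fintype.card_pos
    set ι : Sym2 V → ℕ := fun e => ((Fintype.equivFin (Sym2 V)) e : ℕ) with hι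
    have hιlt : ∀ e, ι e < C := fun e => ((Fintype.equivFin (Sym2 V)) e).isLt
    have hιinj : Function.Injective ι := fun a b h =>
      (Fintype.equivFin (Sym2 V)).injective (Fin.ext h)
    set key : Sym2 V → ℕ := fun e => edgeWt w e * C + ι e with hkey
    have hkeymono : ∀ e e', edgeWt w e < edgeWt w e' → key e < key e' := by
      intro e e' h
      have h1 := hιlt e
      have : edgeWt w e * C + ι e < (edgeWt w e + 1) * C := by
        rw [Nat.add_one_mul]; omega
      calc key e < (edgeWt w e + 1) * C := this
        _ ≤ edgeWt w e' * C := Nat.mul_le_mul_right _ (by omega)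
        _ ≤ key e' := Nat.le_add_right _ _
    have hkeyinj : Function.Injective key := by
      intro e e' h
      have hle : edgeWt w e = edgeWt w e' := by
        rcases Nat.lt_trichotomy (edgeWt w e) (edgeWt w e') with hlt | heq | hgt
        · exact absurd h (Nat.ne_of_lt (hkeymono _ _ hlt))
        · exact heq
        · exact absurd h.symm (Nat.ne_of_lt (hkeymono _ _ hgt))
      apply hιinj
      simp only [hkey, hle] at h
      omega
    set rank : Sym2 V → ℕ := fun e => (EF.filter (fun e' => key e' < key e)).card
      with hrank
    have hwle : ∀ e, edgeWt w e ≤ 2 * s := edgeWt_le hw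
    -- lower bound: edgeWt w e ≤ rank e
    have hA : ∀ e ∈ EF, edgeWt w e ≤ rank e := by
      intro e he
      set p := edgeWt w e with hp
      rcases Nat.eq_zero_or_pos p with h0 | h0
      · omega
      have hi : p - 1 ≤ 2 * s := by have := hwle e; omega
      have hcard := (hwgF (p - 1) hi).1
      have hsub : EF.filter (fun e' => edgeWt w e' ≤ p - 1)
          ⊆ EF.filter (fun e' => key e' < key e) := by
        intro e' he'
        rw [Finset.mem_filter] at he' ⊢
        exact ⟨he'.1, hkeymono _ _ (by omega)⟩
      have := Finset.card_le_card hsub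
      simp only [hrank]
      omega
    -- upper bound: rank e ≤ edgeWt w e + s
    have hB : ∀ e ∈ EF, rank e ≤ edgeWt w e + s := by
      intro e he
      set p := edgeWt w e with hp
      have hcard := (hwgF p (hwle e)).2
      have hsub : EF.filter (fun e' => key e' < key e)
          ⊆ (EF.filter (fun e' => edgeWt w e' ≤ p)).erase e := by
        intro e' he'
        rw [Finset.mem_filter] at he'
        rw [Finset.mem_erase, Finset.mem_filter]
        refine ⟨fun h => by rw [h] at he'; omega, he'.1, ?_⟩
        by_contra hgt
        have := hkeymono e e' (by omega)
        omega
      have h1 := Finset.card_le_card hsub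
      have h2 : e ∈ EF.filter (fun e' => edgeWt w e' ≤ p) :=
        Finset.mem_filter.mpr ⟨he, le_refl _⟩
      have h3 := Finset.card_erase_of_mem h2
      simp only [hrank]
      omega
    -- rank injective on EF
    have hrmono : ∀ e ∈ EF, ∀ e' ∈ EF, key e < key e' → rank e < rank e' := by
      intro e he e' he' h
      have hsub : EF.filter (fun x => key x < key e)
          ⊆ EF.filter (fun x => key x < key e') := by
        intro x hx
        rw [Finset.mem_filter] at hx ⊢
        exact ⟨hx.1, lt_trans hx.2 h⟩
      have hmem : e ∈ EF.filter (fun x => key x < key e') :=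
        Finset.mem_filter.mpr ⟨he, h⟩
      have hnmem : e ∉ EF.filter (fun x => key x < key e) := by
        rw [Finset.mem_filter]; omega
      exact Finset.card_lt_card (Finset.ssubset_iff_of_subset hsub |>.mpr
        ⟨e, hmem, hnmem⟩)
    have hrinj : ∀ e ∈ EF, ∀ e' ∈ EF, e ≠ e' → rank e ≠ rank e' := by
      intro e he e' he' hne'
      rcases Nat.lt_trichotomy (key e) (key e') with hlt | heq | hgt
      · exact Nat.ne_of_lt (hrmono e he e' he' hlt)
      · exact absurd (hkeyinj heq) hne'
      · exact (Nat.ne_of_lt (hrmono e' he' e he hgt)).symm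
    refine ⟨fun v => w v + 1, fun e => rank e + 1 - edgeWt w e,
      fun v => ⟨by show 1 ≤ w v + 1; omega,
        by show w v + 1 ≤ s + 1; have := hw v; omega⟩, ?_, ?_⟩
    · intro e he
      have he' : e ∈ EF := (hEFmem e).mpr he
      have := hA e he'
      have := hB e he'
      show 1 ≤ rank e + 1 - edgeWt w e ∧ rank e + 1 - edgeWt w e ≤ s + 1
      omega
    · intro u v u' v' huv huv' hne'
      have he : s(u, v) ∈ EF := (hEFmem _).mpr (G.mem_edgeSet.mpr huv)
      have he' : s(u', v') ∈ EF := (hEFmem _).mpr (G.mem_edgeSet.mpr huv')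
      have hA1 := hA _ he
      have hA2 := hA _ he'
      have hr := hrinj _ he _ he' hne'
      rw [edgeWt_mk] at hA1
      rw [edgeWt_mk] at hA2
      simp only [edgeWt_mk]
      omega
end

section
/- Let G = (V,E) be a finite simple graph with m := |E| ≥ 7·10^10 edges and m ≡ 1 (mod 3); set s := (m−1)/3, ε := 2.7·10⁻⁵, B := {v ∈ V : d(v) > εm} and V' := V ∖ B. Suppose the maximum degree Δ satisfies 0.51·m < Δ ≤ 2s, a vertex v1 has d(v1) = Δ, and every vertex other than v1 is adjacent to v1 (i.e. V = {v1} ∪ N(v1)). Then there exists a set X ⊆ V' with |X| ≥ s+1 and |E(X)| ≤ 2s − Δ + 1. -/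
open SimpleGraph Finset

section Aux
variable {V : Type*} [Fintype V] [DecidableEq V] (G : SimpleGraph V) [DecidableRel G.Adj]

/-- edges of `G` with both endpoints in the finset `S` -/
def ewf (S : Finset V) : Finset (Sym2 V) :=
  G.edgeFinset.filter (fun e => ∀ v ∈ e, v ∈ S)

lemma mem_ewf {S : Finset V} {e : Sym2 V} :
    e ∈ ewf G S ↔ e ∈ G.edgeFinset ∧ ∀ v ∈ e, v ∈ S := by simp [ewf]

lemma ewf_mono {S S' : Finset V} (h : S ⊆ S') : ewf G S ⊆ ewf G S' := by
  intro e he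
  rw [mem_ewf] at he ⊢
  exact ⟨he.1, fun v hv => h (he.2 v hv)⟩

/-- induced graph on a finset -/
def indG (S : Finset V) : SimpleGraph V where
  Adj a b := a ∈ S ∧ b ∈ S ∧ G.Adj a b
  symm := ⟨fun a b h => ⟨h.2.1, h.1, h.2.2.symm⟩⟩
  loopless := ⟨fun a h => G.loopless.irrefl a h.2.2⟩

lemma indG_adj {S : Finset V} {a b : V} :
    (indG G S).Adj a b ↔ a ∈ S ∧ b ∈ S ∧ G.Adj a b := Iff.rfl

instance (S : Finset V) : DecidableRel (indG G S).Adj :=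
  fun _ _ => inferInstanceAs (Decidable (_ ∧ _ ∧ _))

lemma indG_edgeFinset (S : Finset V) : (indG G S).edgeFinset = ewf G S := by
  ext e
  induction e using Sym2.ind with
  | _ a b =>
    simp only [mem_edgeFinset, mem_ewf, mem_edgeSet, indG_adj, Sym2.mem_iff]
    constructor
    · rintro ⟨ha, hb, hadj⟩
      exact ⟨hadj, by rintro v (rfl | rfl) <;> assumption⟩
    · rintro ⟨hadj, hmem⟩
      exact ⟨hmem a (Or.inl rfl), hmem b (Or.inr rfl), hadj⟩

lemma indG_neighborFinset (S : Finset V) (v : V) :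
    (indG G S).neighborFinset v =
      if v ∈ S then G.neighborFinset v ∩ S else ∅ := by
  ext u
  by_cases h : v ∈ S <;>
    simp [mem_neighborFinset, indG_adj, h, mem_inter, and_comm]

lemma exists_two_le_deg (S : Finset V) (h : S.card + 2 ≤ 2 * (ewf G S).card) :
    ∃ v ∈ S, 2 ≤ (G.neighborFinset v ∩ S).card := by
  by_contra hc
  push_neg at hc
  have hsum := (indG G S).sum_degrees_eq_twice_card_edges
  rw [indG_edgeFinset] at hsum
  have h1 : ∑ v ∈ S, (indG G S).degree v = ∑ v, (indG G S).degree v := by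
    apply Finset.sum_subset (Finset.subset_univ S)
    intro x _ hx
    simp [SimpleGraph.degree, indG_neighborFinset, hx]
  have h2 : ∑ v ∈ S, (indG G S).degree v ≤ S.card := by
    calc ∑ v ∈ S, (indG G S).degree v ≤ ∑ _v ∈ S, 1 := by
          apply Finset.sum_le_sum
          intro v hv
          have : (indG G S).degree v = (G.neighborFinset v ∩ S).card := by
            simp [SimpleGraph.degree, indG_neighborFinset, hv]
          rw [this]
          exact Nat.lt_succ_iff.mp (hc v hv)
      _ = S.card := by simp
  omega

lemma ewf_erase_bound (S : Finset V) (v : V) (hv : v ∈ S) :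
    (ewf G (S.erase v)).card + (G.neighborFinset v ∩ S).card ≤ (ewf G S).card := by
  classical
  set D := (G.neighborFinset v ∩ S).image (fun u => s(v, u)) with hD
  have hcardD : D.card = (G.neighborFinset v ∩ S).card := by
    apply Finset.card_image_of_injOn
    intro x hx y hy hxy
    have hx' : G.Adj v x := by
      simp only [Finset.coe_inter, Set.mem_inter_iff, Finset.mem_coe,
        mem_neighborFinset] at hx
      exact hx.1
    rcases Sym2.eq_iff.mp hxy with ⟨_, h⟩ | ⟨h1, h2⟩
    · exact h
    · exact absurd h2 hx'.ne'
  have hDsub : D ⊆ ewf G S := by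
    intro e he
    rw [hD, Finset.mem_image] at he
    obtain ⟨u, hu, rfl⟩ := he
    rw [mem_inter, mem_neighborFinset] at hu
    rw [mem_ewf]
    refine ⟨mem_edgeFinset.mpr hu.1, ?_⟩
    intro w hw
    rcases Sym2.mem_iff.mp hw with rfl | rfl
    · exact hv
    · exact hu.2
  have hDdisj : Disjoint (ewf G (S.erase v)) D := by
    rw [Finset.disjoint_right]
    intro e he
    rw [hD, Finset.mem_image] at he
    obtain ⟨u, _, rfl⟩ := he
    intro hmem
    rw [mem_ewf] at hmem
    have := hmem.2 v (by simp)
    exact absurd this (Finset.notMem_erase v S)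
  have hsub : ewf G (S.erase v) ∪ D ⊆ ewf G S :=
    Finset.union_subset (ewf_mono G (Finset.erase_subset v S)) hDsub
  calc (ewf G (S.erase v)).card + (G.neighborFinset v ∩ S).card
      = (ewf G (S.erase v) ∪ D).card := by
        rw [Finset.card_union_of_disjoint hDdisj, hcardD]
    _ ≤ (ewf G S).card := Finset.card_le_card hsub

lemma exists_one_le_deg (S : Finset V) (h : (ewf G S).Nonempty) :
    ∃ v ∈ S, 1 ≤ (G.neighborFinset v ∩ S).card := by
  obtain ⟨e, he⟩ := h
  revert he
  induction e using Sym2.ind with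
  | _ a b =>
    intro he
    rw [mem_ewf] at he
    refine ⟨a, he.2 a (by simp), ?_⟩
    have hadj : G.Adj a b := mem_edgeFinset.mp he.1
    have : b ∈ G.neighborFinset a ∩ S := by
      rw [mem_inter, mem_neighborFinset]
      exact ⟨hadj, he.2 b (by simp)⟩
    exact Finset.card_pos.mpr ⟨b, this⟩

lemma greedy : ∀ (n : ℕ) (S : Finset V), S.card ≤ n → ∀ k T : ℕ, k ≤ S.card → 2*T+1 ≤ k →
    ((ewf G S).card + k ≤ T + S.card ∨ (ewf G S).card + 3*k ≤ 2*S.card + 3*T + 1) →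
    ∃ X, X ⊆ S ∧ X.card = k ∧ (ewf G X).card ≤ T := by
  intro n
  induction n with
  | zero =>
    intro S hS k T hk hT _
    exfalso; omega
  | succ n ih =>
    intro S hS k T hk hT hdisj
    rcases eq_or_lt_of_le hk with heq | hlt
    · exact ⟨S, Finset.Subset.refl S, heq.symm, by omega⟩
    · rcases le_or_gt ((ewf G S).card + k) (T + S.card) with hd1 | hd1'
      · rcases le_or_gt (ewf G S).card T with he | he
        · have hne : S.Nonempty := Finset.card_pos.mp (by omega)
          obtain ⟨v, hv⟩ := hne
          have hmono := Finset.card_le_card (ewf_mono G (Finset.erase_subset v S))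
          have hcard : (S.erase v).card = S.card - 1 := Finset.card_erase_of_mem hv
          obtain ⟨X, hX1, hX2, hX3⟩ := ih (S.erase v) (by omega) k T (by omega) hT
            (Or.inl (by omega))
          exact ⟨X, hX1.trans (Finset.erase_subset v S), hX2, hX3⟩
        · have hne : (ewf G S).Nonempty := Finset.card_pos.mp (by omega)
          obtain ⟨a, ha, hdeg⟩ := exists_one_le_deg G S hne
          have hbd := ewf_erase_bound G S a ha
          have hcard : (S.erase a).card = S.card - 1 := Finset.card_erase_of_mem ha
          obtain ⟨X, hX1, hX2, hX3⟩ := ih (S.erase a) (by omega) k T (by omega) hT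
            (Or.inl (by omega))
          exact ⟨X, hX1.trans (Finset.erase_subset a S), hX2, hX3⟩
      · have hd2 : (ewf G S).card + 3*k ≤ 2*S.card + 3*T + 1 := by
          rcases hdisj with h | h
          · omega
          · exact h
        have h2e : S.card + 2 ≤ 2 * (ewf G S).card := by omega
        obtain ⟨v, hv, hdeg⟩ := exists_two_le_deg G S h2e
        have hbd := ewf_erase_bound G S v hv
        have hcard : (S.erase v).card = S.card - 1 := Finset.card_erase_of_mem hv
        obtain ⟨X, hX1, hX2, hX3⟩ := ih (S.erase v) (by omega) k T (by omega) hT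
          (Or.inr (by omega))
        exact ⟨X, hX1.trans (Finset.erase_subset v S), hX2, hX3⟩

end Aux

/-- `E(X)` : the set of edges of `G` with both endpoints in `X`. -/
def edgesWithin {V : Type*} (G : SimpleGraph V) (X : Set V) : Set (Sym2 V) :=
  {e ∈ G.edgeSet | ∀ v ∈ e, v ∈ X}

/-- Claim 2 of Case 1. Under the hypotheses of Case 1, there is a set
`X ⊆ V'` with `|X| ≥ s + 1` and `|E(X)| ≤ 2s − Δ + 1`. -/
theorem exists_large_sparse_subset {V : Type*} [Fintype V] [DecidableEq V]
    (G : SimpleGraph V) [DecidableRel G.Adj]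
    (m s : ℕ) (hm : m = G.edgeSet.ncard) (hs : m = 3 * s + 1)
    (hlarge : 7 * 10 ^ 10 ≤ m)
    (ε : ℝ) (hε : ε = 2.7e-5)
    (B : Set V) (hB : B = {v : V | ε * m < (G.degree v : ℝ)})
    (V' : Set V) (hV' : V' = Bᶜ)
    (hΔlo : 0.51 * (m : ℝ) < (G.maxDegree : ℝ)) (hΔhi : G.maxDegree ≤ 2 * s)
    (v1 : V) (hv1 : G.degree v1 = G.maxDegree)
    (hdom : ∀ u : V, u ≠ v1 → G.Adj v1 u) :
    ∃ X ⊆ V', s + 1 ≤ X.ncard ∧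
      ((edgesWithin G X).ncard : ℤ) ≤ 2 * (s : ℤ) - (G.maxDegree : ℤ) + 1 := by

  classical
  subst hε hB hV'
  -- m as a Finset count, positivity
  have hmE : m = G.edgeFinset.card := by
    rw [hm, ← G.coe_edgeFinset, Set.ncard_coe_finset]
  have hmR : (70000000000 : ℝ) ≤ (m : ℝ) := by exact_mod_cast hlarge
  -- Δ bound as naturals
  have h51 : 51 * m < 100 * G.maxDegree := by
    have : (51 * m : ℝ) < 100 * (G.maxDegree : ℝ) := by nlinarith
    exact_mod_cast this
  -- the finset B
  set Bf : Finset V := Finset.univ.filter (fun v => (2.7e-5 : ℝ) * m < (G.degree v : ℝ))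
    with hBf
  have hBcoe : {v : V | (2.7e-5 : ℝ) * m < (G.degree v : ℝ)} = (↑Bf : Set V) := by
    ext v; simp [hBf]
  have hv1B : v1 ∈ Bf := by
    rw [hBf, Finset.mem_filter]
    refine ⟨Finset.mem_univ v1, ?_⟩
    rw [hv1]
    nlinarith
  -- degree sum
  have hsum2m : ∑ v, G.degree v = 2 * m := by
    rw [hmE]; exact G.sum_degrees_eq_twice_card_edges
  have hBsum : ∑ v ∈ Bf, G.degree v ≤ 2 * m := by
    rw [← hsum2m]
    exact Finset.sum_le_sum_of_subset (Finset.subset_univ Bf)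
  -- |B| ≤ 74074
  have hBcard : Bf.card ≤ 74074 := by
    have h1 : (Bf.card : ℝ) * (2.7e-5 * m) ≤ ∑ v ∈ Bf, (G.degree v : ℝ) := by
      rw [← nsmul_eq_mul]
      apply Finset.card_nsmul_le_sum
      intro v hv
      exact le_of_lt (by simpa [hBf] using (Finset.mem_filter.mp hv).2)
    have h2 : (∑ v ∈ Bf, (G.degree v : ℝ)) ≤ 2 * (m : ℝ) := by
      have := hBsum
      push_cast [← Nat.cast_sum]
      exact_mod_cast this
    have h3 : (Bf.card : ℝ) < 74075 := by nlinarith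
    have h4 : Bf.card < 74075 := by exact_mod_cast h3
    omega
  -- |V| = Δ + 1
  have huniv : (Finset.univ : Finset V) = insert v1 (G.neighborFinset v1) := by
    ext u
    simp only [Finset.mem_univ, true_iff, Finset.mem_insert, mem_neighborFinset]
    by_cases h : u = v1
    · exact Or.inl h
    · exact Or.inr (hdom u h)
  have hcardV : Fintype.card V = G.maxDegree + 1 := by
    rw [← hv1, ← Finset.card_univ, huniv,
      Finset.card_insert_of_notMem (by rw [mem_neighborFinset]; exact G.irrefl),
      G.card_neighborFinset_eq_degree]
  set S₀ : Finset V := Bfᶜ with hS₀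
  have hS₀card : S₀.card = Fintype.card V - Bf.card := Finset.card_compl Bf
  -- incidence at v1
  have hincsub : G.incidenceFinset v1 ⊆ G.edgeFinset := by
    intro e he
    rw [mem_incidenceFinset] at he
    exact mem_edgeFinset.mpr he.1
  have hinc1 : (G.incidenceFinset v1).card = G.maxDegree := by
    rw [G.card_incidenceFinset_eq_degree, hv1]
  -- edges within S₀ avoid v1
  have hsubE1 : ewf G S₀ ⊆ G.edgeFinset \ G.incidenceFinset v1 := by
    intro e he
    rw [mem_ewf] at he
    rw [Finset.mem_sdiff]
    refine ⟨he.1, ?_⟩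
    intro hmem
    rw [mem_incidenceFinset] at hmem
    have := he.2 v1 hmem.2
    rw [hS₀, Finset.mem_compl] at this
    exact this hv1B
  have he0 : (ewf G S₀).card + G.maxDegree ≤ m := by
    have h1 := Finset.card_le_card hsubE1
    rw [Finset.card_sdiff_of_subset hincsub, hinc1] at h1
    have h2 := Finset.card_le_card hincsub
    omega
  have hΔ32 : 3 * s + 2 ≤ 2 * G.maxDegree := by omega
  -- the key disjunct-2 inequality
  have hkey : (ewf G S₀).card + 3 * (s + 1) ≤
      2 * S₀.card + 3 * (2 * s + 1 - G.maxDegree) + 1 := by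
    rcases eq_or_lt_of_le (Finset.one_le_card.mpr ⟨v1, hv1B⟩) with hb1 | hb2
    · -- Bf = {v1}
      omega
    · -- there is b ∈ Bf, b ≠ v1
      obtain ⟨b, hbB, hbne⟩ := Finset.exists_mem_ne hb2 v1
      have hdegb : 1890000 ≤ G.degree b := by
        have hb' : (2.7e-5 : ℝ) * m < (G.degree b : ℝ) := by
          simpa [hBf] using (Finset.mem_filter.mp hbB).2
        have : (1890000 : ℝ) < (G.degree b : ℝ) := by nlinarith
        exact_mod_cast this.le
      -- edges within S₀ avoid b too
      have hsubE2 : ewf G S₀ ⊆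
          G.edgeFinset \ (G.incidenceFinset v1 ∪ G.incidenceFinset b) := by
        intro e he
        have h1 := hsubE1 he
        rw [Finset.mem_sdiff] at h1 ⊢
        refine ⟨h1.1, ?_⟩
        rw [Finset.mem_union]
        rintro (h | h)
        · exact h1.2 h
        · rw [mem_ewf] at he
          rw [mem_incidenceFinset] at h
          have := he.2 b h.2
          rw [hS₀, Finset.mem_compl] at this
          exact this hbB
      have hintsub : G.incidenceFinset v1 ∩ G.incidenceFinset b ⊆ {s(v1, b)} := by
        intro e he
        rw [Finset.mem_inter, mem_incidenceFinset, mem_incidenceFinset] at he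
        obtain ⟨⟨he1, hv1e⟩, ⟨_, hbe⟩⟩ := he
        rw [Finset.mem_singleton]
        revert he1 hv1e hbe
        induction e using Sym2.ind with
        | _ x y =>
          intro he1 hv1e hbe
          rw [Sym2.mem_iff] at hv1e hbe
          rcases hv1e with rfl | rfl <;> rcases hbe with rfl | rfl
          · exact absurd rfl hbne.symm
          · rfl
          · exact Sym2.eq_swap
          · exact absurd rfl hbne.symm
      have hub : G.incidenceFinset v1 ⊆ G.edgeFinset ∧ G.incidenceFinset b ⊆ G.edgeFinset := by
        constructor <;> (intro e he; rw [mem_incidenceFinset] at he; exact mem_edgeFinset.mpr he.1)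
      have hunionsub : G.incidenceFinset v1 ∪ G.incidenceFinset b ⊆ G.edgeFinset :=
        Finset.union_subset hub.1 hub.2
      have hcap : (G.incidenceFinset v1 ∩ G.incidenceFinset b).card ≤ 1 := by
        have := Finset.card_le_card hintsub
        simpa using this
      have hcup : G.maxDegree + G.degree b ≤
          (G.incidenceFinset v1 ∪ G.incidenceFinset b).card + 1 := by
        have := Finset.card_union_add_card_inter (G.incidenceFinset v1) (G.incidenceFinset b)
        rw [hinc1, G.card_incidenceFinset_eq_degree] at this
        omega
      have h1 := Finset.card_le_card hsubE2
      rw [Finset.card_sdiff_of_subset hunionsub] at h1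
      have h2 := Finset.card_le_card hunionsub
      omega
  -- apply the greedy lemma
  obtain ⟨X, hXsub, hXcard, hXe⟩ := greedy G (Fintype.card V) S₀ (Finset.card_le_univ S₀)
    (s + 1) (2 * s + 1 - G.maxDegree) (by omega) (by omega) (Or.inr hkey)
  refine ⟨(↑X : Set V), ?_, ?_, ?_⟩
  · intro v hv
    rw [hBcoe, Set.mem_compl_iff]
    have := hXsub hv
    rw [hS₀, Finset.mem_compl] at this
    exact fun hc => this hc
  · rw [Set.ncard_coe_finset, hXcard]
  · have hEeq : edgesWithin G (↑X : Set V) = (↑(ewf G X) : Set (Sym2 V)) := by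
      ext e
      simp only [edgesWithin, Set.mem_setOf_eq, Finset.coe_filter, ewf, mem_edgeFinset,
        Finset.mem_coe, Finset.mem_filter]
    rw [hEeq, Set.ncard_coe_finset]
    have : (ewf G X).card ≤ 2 * s + 1 - G.maxDegree := hXe
    omega
end

section
/- Let G = (V,E) be a finite simple graph and let u, v be two distinct vertices of G at distance at least 3 (in particular u and v are non-adjacent and have no common neighbour). Let G' be the graph obtained from G by identifying u and v, i.e. V(G') = V ∖ {v} and E(G') consists of all edges of G not incident to v together with an edge uw for every edge vw of G. Then |E(G')| = |E(G)| and tes(G) ≤ tes(G'). -/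
open SimpleGraph

/-- The total edge irregularity strength of `G`. -/
noncomputable def tes {V : Type*} (G : SimpleGraph V) : ℕ :=
  sInf {s : ℕ | ∃ (wv : V → ℕ) (we : Sym2 V → ℕ), IsEdgeIrregularTotalWeighting G s wv we}

lemma exists_weighting {V : Type*} [Fintype V] [DecidableEq V] (G : SimpleGraph V) :
    {s : ℕ | ∃ (wv : V → ℕ) (we : Sym2 V → ℕ),
      IsEdgeIrregularTotalWeighting G s wv we}.Nonempty := by
  classical
  let E := Fintype.equivFin (Sym2 V)
  refine ⟨Fintype.card (Sym2 V) + 1, fun _ => 1, fun e => (E e : ℕ) + 1, ?_, ?_, ?_⟩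
  · intro x
    simp only
    omega
  · intro e _
    have := (E e).isLt
    simp only
    omega
  · intro a b a' b' _ _ hne
    have h1 : E s(a, b) ≠ E s(a', b') := fun h => hne (E.injective h)
    have h2 : (E s(a, b) : ℕ) ≠ (E s(a', b') : ℕ) := fun h => h1 (Fin.ext h)
    simp only
    omega

/-- If `u` and `v` are distinct vertices at distance at least `3` in `G`
(non-adjacent with no common neighbour) and `G'` is obtained from `G` by identifying `u`
and `v` (vertex set `V ∖ {v}`; edges of `G` not incident to `v`, plus an edge `uw` for
every edge `vw` of `G`), then `|E(G')| = |E(G)|` and `tes(G) ≤ tes(G')`. -/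
theorem tes_le_of_identify {V : Type*} [Fintype V] [DecidableEq V]
    (G : SimpleGraph V) (u v : V) (huv : u ≠ v)
    (hadj : ¬ G.Adj u v) (hcn : ∀ w : V, ¬ (G.Adj u w ∧ G.Adj w v))
    (G' : SimpleGraph {x : V // x ≠ v})
    (hG' : ∀ a b : {x : V // x ≠ v},
      G'.Adj a b ↔
        (G.Adj a b ∨ ((a : V) = u ∧ G.Adj v b) ∨ ((b : V) = u ∧ G.Adj (a : V) v))) :
    G'.edgeSet.ncard = G.edgeSet.ncard ∧ tes G ≤ tes G' := by
  classical
  set f : V → {x : V // x ≠ v} := fun x => if h : x = v then ⟨u, huv⟩ else ⟨x, h⟩ with hf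
  have hfv : f v = ⟨u, huv⟩ := by simp [hf]
  have hfne : ∀ (x : V) (h : x ≠ v), f x = ⟨x, h⟩ := fun x h => by simp [hf, h]
  have hval : ∀ x : V, (f x : V) = if x = v then u else x := by
    intro x
    by_cases h : x = v <;> simp [hf, h]
  have feq : ∀ x y : V, f x = f y → x = y ∨ (x = u ∧ y = v) ∨ (x = v ∧ y = u) := by
    intro x y hxy
    have h := congrArg Subtype.val hxy
    rw [hval, hval] at h
    split_ifs at h with h1 h2 h2
    · left; rw [h1, h2]
    · right; right; exact ⟨h1, h.symm⟩
    · right; left; exact ⟨h, h2⟩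
    · left; exact h
  have hmap : ∀ a b : V, G.Adj a b → G'.Adj (f a) (f b) := by
    intro a b hab
    by_cases ha : a = v
    · have hb : b ≠ v := by
        intro h
        rw [ha, h] at hab
        exact G.irrefl hab
      rw [ha, hfv, hfne b hb, hG']
      right; left
      refine ⟨rfl, ?_⟩
      rwa [ha] at hab
    · by_cases hb : b = v
      · rw [hfne a ha, hb, hfv, hG']
        right; right
        refine ⟨rfl, ?_⟩
        rwa [hb] at hab
      · rw [hfne a ha, hfne b hb, hG']
        left; exact hab
  have resolve : ∀ a b a' b' : V, G.Adj a b → G.Adj a' b' →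
      (a = a' ∨ (a = u ∧ a' = v) ∨ (a = v ∧ a' = u)) →
      (b = b' ∨ (b = u ∧ b' = v) ∨ (b = v ∧ b' = u)) →
      a = a' ∧ b = b' := by
    intro a b a' b' hab hab' h1 h2
    rcases h1 with h1 | ⟨h1, h1'⟩ | ⟨h1, h1'⟩ <;>
      rcases h2 with h2 | ⟨h2, h2'⟩ | ⟨h2, h2'⟩
    · exact ⟨h1, h2⟩
    · rw [h2] at hab
      rw [← h1, h2'] at hab'
      exact absurd ⟨hab.symm, hab'⟩ (hcn a)
    · rw [h2] at hab
      rw [← h1, h2'] at hab'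
      exact absurd ⟨hab'.symm, hab⟩ (hcn a)
    · rw [h1, h2] at hab
      rw [h1'] at hab'
      exact absurd ⟨hab, hab'.symm⟩ (hcn b')
    · rw [h1, h2] at hab
      exact absurd hab (G.irrefl)
    · rw [h1, h2] at hab
      exact absurd hab hadj
    · rw [h1, h2] at hab
      rw [h1'] at hab'
      exact absurd ⟨hab', hab.symm⟩ (hcn b')
    · rw [h1, h2] at hab
      exact absurd hab.symm hadj
    · rw [h1, h2] at hab
      exact absurd hab (G.irrefl)
  have hinj : ∀ a b a' b' : V, G.Adj a b → G.Adj a' b' →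
      s(f a, f b) = s(f a', f b') → s(a, b) = s(a', b') := by
    intro a b a' b' hab hab' h
    rw [Sym2.eq_iff] at h
    rcases h with ⟨h1, h2⟩ | ⟨h1, h2⟩
    · obtain ⟨e1, e2⟩ := resolve a b a' b' hab hab' (feq _ _ h1) (feq _ _ h2)
      rw [e1, e2]
    · obtain ⟨e1, e2⟩ := resolve a b b' a' hab hab'.symm (feq _ _ h1) (feq _ _ h2)
      rw [e1, e2, Sym2.eq_swap]
  have hbij : Set.BijOn (Sym2.map f) G.edgeSet G'.edgeSet := by
    refine ⟨?_, ?_, ?_⟩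
    · intro e he
      induction e using Sym2.ind with
      | _ a b =>
        rw [Sym2.map_pair_eq]
        exact (G'.mem_edgeSet).mpr (hmap a b ((G.mem_edgeSet).mp he))
    · intro e he e' he' h
      induction e using Sym2.ind with
      | _ a b =>
        induction e' using Sym2.ind with
        | _ a' b' =>
          rw [Sym2.map_pair_eq, Sym2.map_pair_eq] at h
          exact hinj a b a' b' ((G.mem_edgeSet).mp he) ((G.mem_edgeSet).mp he') h
    · intro e' he'
      induction e' using Sym2.ind with
      | _ x y =>
        have hxy : G'.Adj x y := (G'.mem_edgeSet).mp he'
        rw [hG'] at hxy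
        rcases hxy with h | ⟨h1, h2⟩ | ⟨h1, h2⟩
        · refine ⟨s(x.1, y.1), (G.mem_edgeSet).mpr h, ?_⟩
          rw [Sym2.map_pair_eq, hfne x.1 x.2, hfne y.1 y.2]
        · refine ⟨s(v, y.1), (G.mem_edgeSet).mpr h2, ?_⟩
          have hx : (⟨u, huv⟩ : {x : V // x ≠ v}) = x := Subtype.ext h1.symm
          rw [Sym2.map_pair_eq, hfv, hfne y.1 y.2, hx]
        · refine ⟨s(x.1, v), (G.mem_edgeSet).mpr h2, ?_⟩
          have hy : (⟨u, huv⟩ : {x : V // x ≠ v}) = y := Subtype.ext h1.symm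
          rw [Sym2.map_pair_eq, hfv, hfne x.1 x.2, hy]
  constructor
  · rw [← hbij.image_eq]
    exact Set.ncard_image_of_injOn hbij.injOn
  · obtain ⟨wv', we', h1, h2, h3⟩ := Nat.sInf_mem (exists_weighting G')
    refine Nat.sInf_le ⟨fun x => wv' (f x), fun e => we' (Sym2.map f e), ?_, ?_, ?_⟩
    · intro x
      exact h1 (f x)
    · intro e he
      induction e using Sym2.ind with
      | _ a b =>
        simp only [Sym2.map_pair_eq]
        exact h2 _ ((G'.mem_edgeSet).mpr (hmap a b ((G.mem_edgeSet).mp he)))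
    · intro a b a' b' hab hab' hne
      simp only [Sym2.map_pair_eq]
      exact h3 (f a) (f b) (f a') (f b') (hmap a b hab) (hmap a' b' hab')
        (fun h => hne (hinj a b a' b' hab hab' h))
end

section
/- Let G be a finite simple graph with m := |E(G)| ≥ 1 edges and maximum degree Δ. Then tes(G) ≥ max{⌈(m+2)/3⌉, ⌈(Δ+1)/2⌉}. -/
open SimpleGraph

lemma edge_rep {V : Type*} {G : SimpleGraph V} {e : Sym2 V} (he : e ∈ G.edgeSet) :
    ∃ u v, G.Adj u v ∧ e = s(u, v) := by
  revert he
  induction e using Sym2.inductionOn with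
  | hf u v => exact fun he => ⟨u, v, he, rfl⟩

/-- Existence of an edge irregular total weighting for some `s`. -/
lemma tes_set_nonempty {V : Type*} [Fintype V] [DecidableEq V]
    (G : SimpleGraph V) [DecidableRel G.Adj] :
    {s : ℕ | ∃ (wv : V → ℕ) (we : Sym2 V → ℕ),
      IsEdgeIrregularTotalWeighting G s wv we}.Nonempty := by
  classical
  set E : Finset (Sym2 V) := G.edgeSet.toFinset with hE
  refine ⟨E.card + 1, fun _ => 1,
    fun e => if h : e ∈ E then ((E.equivFin ⟨e, h⟩ : Fin E.card) : ℕ) + 1 else 1, ?_, ?_, ?_⟩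
  · exact fun v => ⟨le_rfl, Nat.succ_le_succ (Nat.zero_le _)⟩
  · intro e he
    have h : e ∈ E := by simpa [hE, Set.mem_toFinset] using he
    simp only []
    rw [dif_pos h]
    have := (E.equivFin ⟨e, h⟩).isLt
    omega
  · intro u v u' v' huv huv' hne
    have h1 : s(u, v) ∈ E := by simpa [hE, Set.mem_toFinset] using huv
    have h2 : s(u', v') ∈ E := by simpa [hE, Set.mem_toFinset] using huv'
    simp only []
    rw [dif_pos h1, dif_pos h2]
    intro hcontra
    have : ((E.equivFin ⟨s(u, v), h1⟩ : Fin E.card) : ℕ)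
        = ((E.equivFin ⟨s(u', v'), h2⟩ : Fin E.card) : ℕ) := by omega
    have := E.equivFin.injective (Fin.ext this)
    exact hne (congrArg Subtype.val this)

/-- For every finite simple graph `G` with `m ≥ 1` edges and maximum
degree `Δ`, we have `tes(G) ≥ max{⌈(m+2)/3⌉, ⌈(Δ+1)/2⌉}`. -/
theorem tes_ge_max {V : Type*} [Fintype V] [DecidableEq V]
    (G : SimpleGraph V) [DecidableRel G.Adj]
    (m : ℕ) (hm : m = G.edgeSet.ncard) (hpos : 1 ≤ m) :
    max ⌈((m : ℚ) + 2) / 3⌉ ⌈((G.maxDegree : ℚ) + 1) / 2⌉ ≤ (tes G : ℤ) := by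
  classical
  obtain ⟨wv, we, h1, h2, h3⟩ := Nat.sInf_mem (tes_set_nonempty G)
  set t := sInf {s : ℕ | ∃ (wv : V → ℕ) (we : Sym2 V → ℕ),
    IsEdgeIrregularTotalWeighting G s wv we} with ht
  have hteq : tes G = t := rfl
  rw [hteq]
  -- there is an edge, hence a vertex, hence t ≥ 1
  have hEne : G.edgeSet.Nonempty := by
    rw [← Set.ncard_pos (Set.toFinite _), ← hm]; omega
  obtain ⟨e0, he0⟩ := hEne
  obtain ⟨u0, v0, hadj0, -⟩ := edge_rep he0
  have hVne : Nonempty V := ⟨u0⟩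
  have ht1 : 1 ≤ t := le_trans (h1 u0).1 (h1 u0).2
  -- Bound 1 : m + 2 ≤ 3t
  have hb1 : m + 2 ≤ 3 * t := by
    set f : Sym2 V → ℕ :=
      fun e => we e + Sym2.lift ⟨fun u v => wv u + wv v, fun u v => by ring⟩ e with hf
    have hmaps : ∀ e ∈ G.edgeSet, f e ∈ Set.Icc 3 (3 * t) := by
      intro e he
      obtain ⟨u, v, hadj, rfl⟩ := edge_rep he
      have hu := h1 u; have hv := h1 v
      have hwe := h2 _ (G.mem_edgeSet.mpr hadj)
      simp only [hf, Sym2.lift_mk, Set.mem_Icc]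
      omega
    have hinj : Set.InjOn f G.edgeSet := by
      intro e he e' he' hfe
      by_contra hne
      obtain ⟨u, v, hadj, rfl⟩ := edge_rep he
      obtain ⟨u', v', hadj', rfl⟩ := edge_rep he'
      apply h3 u v u' v' hadj hadj' hne
      simp only [hf, Sym2.lift_mk] at hfe
      omega
    have hcard := Set.ncard_le_ncard_of_injOn f hmaps hinj (Set.toFinite _)
    rw [← hm] at hcard
    have hicc : (Set.Icc 3 (3 * t)).ncard = 3 * t + 1 - 3 := by
      rw [← Finset.coe_Icc, Set.ncard_coe_finset, Nat.card_Icc]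
    omega
  -- Bound 2 : Δ + 1 ≤ 2t
  have hb2 : G.maxDegree + 1 ≤ 2 * t := by
    obtain ⟨v, hv⟩ := G.exists_maximal_degree_vertex
    set g : V → ℕ := fun u => we s(v, u) + wv u with hg
    have hmaps : ∀ u ∈ G.neighborFinset v, g u ∈ Finset.Icc 2 (2 * t) := by
      intro u hu
      rw [SimpleGraph.mem_neighborFinset] at hu
      have hwe := h2 _ (G.mem_edgeSet.mpr hu)
      have := h1 u
      simp only [hg, Finset.mem_Icc]
      omega
    have hinj : Set.InjOn g (G.neighborFinset v) := by
      intro u hu u' hu' hgu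
      by_contra hne
      rw [Finset.mem_coe, SimpleGraph.mem_neighborFinset] at hu hu'
      apply h3 v u v u' hu hu' (fun h => hne (Sym2.congr_right.mp h))
      simp only [hg] at hgu
      omega
    have hcard := Finset.card_le_card_of_injOn g hmaps hinj
    rw [Nat.card_Icc] at hcard
    rw [hv]
    have hdeg : G.degree v = (G.neighborFinset v).card := rfl
    omega
  -- conclude
  rw [max_le_iff]
  constructor <;> rw [Int.ceil_le] <;> push_cast
  · rw [div_le_iff₀ (by norm_num)]
    have : (m : ℚ) + 2 ≤ 3 * t := by exact_mod_cast hb1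
    linarith
  · rw [div_le_iff₀ (by norm_num)]
    have : (G.maxDegree : ℚ) + 1 ≤ 2 * t := by exact_mod_cast hb2
    linarith
end
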